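/- Let G be a finite group containing an RDS R with forbidden subgroup U, and let 𝒢 ≤ Aut(G)_R ⋉ G satisfy: |𝒢| = |G|, 1 × X := (1 × G) ∩ 𝒢 is normal in both 1 × G and 𝒢, and 𝒢 acts transitively on right cosets of X in G via (Xh)^(φ,g) = X h^φ g. Then 𝒰 := {(φ,g) ∈ 𝒢 : g ∈ U} is a subgroup of 𝒢 with |𝒰| = |U|, and ℛ := {(φ,r) ∈ 𝒢 : r ∈ R} is an RDS in 𝒢 with the same parameters as R, with forbidden subgroup 𝒰. -/
import Mathlib



/-- The "right holomorph": pairs (φ, g) with multiplication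
(φ₁,g₁)(φ₂,g₂) = (φ₁φ₂, g₁^{φ₂} g₂), composition of automorphisms left-to-right. -/
@[ext] structure RHol (G : Type*) [Group G] where
  aut : MulAut G
  el : G

namespace RHol

variable {G : Type*} [Group G]

instance : Mul (RHol G) := ⟨fun a b => ⟨a.aut.trans b.aut, b.aut a.el * b.el⟩⟩
instance : One (RHol G) := ⟨⟨MulEquiv.refl G, 1⟩⟩
instance : Inv (RHol G) := ⟨fun a => ⟨a.aut.symm, a.aut.symm a.el⁻¹⟩⟩

@[simp] lemma mul_aut (a b : RHol G) : (a * b).aut = a.aut.trans b.aut := rfl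
@[simp] lemma mul_el (a b : RHol G) : (a * b).el = b.aut a.el * b.el := rfl
@[simp] lemma one_aut : (1 : RHol G).aut = MulEquiv.refl G := rfl
@[simp] lemma one_el : (1 : RHol G).el = 1 := rfl
@[simp] lemma inv_aut (a : RHol G) : a⁻¹.aut = a.aut.symm := rfl
@[simp] lemma inv_el (a : RHol G) : a⁻¹.el = a.aut.symm a.el⁻¹ := rfl

instance : Group (RHol G) where
  mul_assoc a b c := by
    refine RHol.ext ?_ ?_
    · exact MulEquiv.ext fun x => rfl
    · show c.aut (b.aut a.el * b.el) * c.el = (b.aut.trans c.aut) a.el * (c.aut b.el * c.el)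
      simp [mul_assoc]
  one_mul a := by
    refine RHol.ext ?_ ?_
    · exact MulEquiv.ext fun x => rfl
    · show a.aut 1 * a.el = a.el
      simp
  mul_one a := by
    refine RHol.ext ?_ ?_
    · exact MulEquiv.ext fun x => rfl
    · show (MulEquiv.refl G) a.el * 1 = a.el
      simp
  inv_mul_cancel a := by
    refine RHol.ext ?_ ?_
    · exact MulEquiv.ext fun x => by simp
    · show a.aut (a.aut.symm a.el⁻¹) * a.el = 1
      simp

end RHol

section Defs

variable {G : Type*} [Group G]

/-- Number of ways to write `g = d₁ * d₂⁻¹` with `d₁, d₂ ∈ D`. -/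
noncomputable def diffCount (D : Set G) (g : G) : ℕ :=
  Nat.card {p : D × D // (p.1 : G) * (p.2 : G)⁻¹ = g}

def IsRDS (R : Set G) (U : Subgroup G) (m u k l : ℕ) : Prop :=
  Nat.card G = m * u ∧ Nat.card U = u ∧ Nat.card R = k ∧
    (∀ g : G, g ∉ U → diffCount R g = l) ∧
    (∀ g : G, g ∈ U → g ≠ 1 → diffCount R g = 0)

end Defs

section Helpers

variable {G : Type*} [Group G]

lemma diffCount_eq_card (D : Set G) (g : G) :
    diffCount D g = Nat.card {x : G // x ∈ D ∧ g * x ∈ D} := by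
  apply Nat.card_congr
  have key : ∀ p : {p : D × D // (p.1 : G) * (p.2 : G)⁻¹ = g},
      g * (p.1.2 : G) = (p.1.1 : G) := by
    rintro ⟨⟨a, b⟩, hab⟩
    simp only at hab
    show g * (b : G) = (a : G)
    rw [← hab]; group
  exact
  { toFun := fun p => ⟨p.1.2, p.1.2.2, by rw [key p]; exact p.1.1.2⟩
    invFun := fun x => ⟨(⟨g * x, x.2.2⟩, ⟨x, x.2.1⟩), by group⟩
    left_inv := fun p => by
      apply Subtype.ext
      apply Prod.ext
      · exact Subtype.ext (key p)
      · rfl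
    right_inv := fun x => rfl }

lemma mem_of_image_eq {D : Set G} (φ : G ≃* G) (hφ : φ '' D = D) {x : G} :
    φ x ∈ D ↔ x ∈ D := by
  constructor
  · intro h
    rw [← hφ] at h
    obtain ⟨y, hy, he⟩ := h
    rwa [← φ.injective he]
  · intro h
    rw [← hφ]
    exact ⟨x, h, rfl⟩

lemma diffCount_map {D : Set G} (φ : G ≃* G) (hφ : φ '' D = D) (g : G) :
    diffCount D (φ g) = diffCount D g := by
  rw [diffCount_eq_card, diffCount_eq_card]
  refine (Nat.card_congr (Equiv.subtypeEquiv φ.toEquiv fun x => ?_)).symm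
  rw [show (φ.toEquiv x) = φ x from rfl, ← map_mul]
  exact and_congr (mem_of_image_eq φ hφ).symm (mem_of_image_eq φ hφ).symm

end Helpers

/-- Combinatorial transfer for relative difference sets (Theorem 1.2). -/
theorem combinatorial_transfer_rds {G : Type*} [Group G] [Finite G]
    (R : Set G) (U : Subgroup G) (m u k l : ℕ) (hl : 0 < l)
    (hR : IsRDS R U m u k l)
    (𝒢 : Subgroup (RHol G)) (X : Subgroup G)
    (h𝒢le : ∀ x ∈ 𝒢, (RHol.aut x) '' R = R)
    (hcard : Nat.card 𝒢 = Nat.card G)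
    (hX : ∀ g : G, g ∈ X ↔ (⟨1, g⟩ : RHol G) ∈ 𝒢)
    (hXnormalG : X.Normal)
    (hXnormal𝒢 : ∀ x ∈ 𝒢, ∀ g ∈ X, ((x⁻¹ * ⟨1, g⟩ * x : RHol G)).el ∈ X)
    (htrans : ∀ h₁ h₂ : G, ∃ x ∈ 𝒢, (RHol.aut x) h₁ * (RHol.el x) * h₂⁻¹ ∈ X) :
    ∃ 𝒰 : Subgroup 𝒢, ((𝒰 : Set 𝒢) = {x : 𝒢 | (x : RHol G).el ∈ U}) ∧
      Nat.card 𝒰 = Nat.card U ∧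
      IsRDS {x : 𝒢 | (x : RHol G).el ∈ R} 𝒰 m u k l := by
  classical
  obtain ⟨hmu, hu, hk, hout, hin⟩ := hR
  haveI : Finite (RHol G) :=
    Finite.of_injective (fun x : RHol G => ((x.aut : G → G), x.el))
      (by
        rintro ⟨a1, e1⟩ ⟨a2, e2⟩ h
        simp only [Prod.mk.injEq] at h
        exact RHol.ext (DFunLike.coe_injective h.1) h.2)
  have hGpos : 0 < Nat.card G := Nat.card_pos
  -- automorphisms in 𝒢 preserve X
  have autX : ∀ w : RHol G, w ∈ 𝒢 → ∀ a : G, a ∈ X → w.aut a ∈ X := by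
    intro w hw a ha
    have h1 := hXnormal𝒢 w hw a ha
    have h2 : (w⁻¹ * ⟨1, a⟩ * w).el = w.el⁻¹ * w.aut a * w.el := by
      show w.aut ((⟨1, a⟩ : RHol G).aut (w⁻¹.el) * a) * w.el = _
      simp [mul_assoc]
    rw [h2] at h1
    have h3 := hXnormalG.conj_mem _ h1 w.el
    convert h3 using 1
    group
  -- automorphisms in 𝒢 preserve R (as an iff)
  have memR : ∀ w : RHol G, w ∈ 𝒢 → ∀ a : G, (w.aut a ∈ R ↔ a ∈ R) :=
    fun w hw a => mem_of_image_eq w.aut (h𝒢le w hw)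
  -- automorphisms in 𝒢 preserve U
  have charU : ∀ g : G, g ∈ U ↔ (g = 1 ∨ diffCount R g = 0) := by
    intro g
    constructor
    · intro hg
      by_cases h1 : g = 1
      · exact Or.inl h1
      · exact Or.inr (hin g hg h1)
    · rintro (rfl | h0)
      · exact one_mem U
      · by_contra hg
        rw [hout g hg] at h0
        omega
  have autU : ∀ w : RHol G, w ∈ 𝒢 → ∀ a : G, (w.aut a ∈ U ↔ a ∈ U) := by
    intro w hw a
    rw [charU (w.aut a), charU a, diffCount_map w.aut (h𝒢le w hw)]
    refine or_congr ⟨fun h => ?_, fun h => by rw [h, map_one]⟩ Iff.rfl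
    exact w.aut.injective (h.trans (map_one w.aut).symm)
  -- a choice of coset representatives inside 𝒢
  have hy' : ∀ g : G, ∃ x : 𝒢, (x : RHol G).el * g⁻¹ ∈ X := by
    intro g
    obtain ⟨x, hx𝒢, hx⟩ := htrans 1 g
    exact ⟨⟨x, hx𝒢⟩, by simpa using hx⟩
  choose y hy using hy'
  -- counting the fiber over the trivial coset
  have cardP1 : Nat.card {p : 𝒢 × G // ((p.1 : RHol G)).el * p.2⁻¹ ∈ X}
      = Nat.card 𝒢 * Nat.card X := by
    rw [← Nat.card_prod]
    apply Nat.card_congr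
    exact
    { toFun := fun p => (p.1.1, ⟨(p.1.1 : RHol G).el * p.1.2⁻¹, p.2⟩)
      invFun := fun q => ⟨(q.1, (q.2 : G)⁻¹ * (q.1 : RHol G).el), by
        have : ((q.1 : RHol G)).el * ((q.2 : G)⁻¹ * (q.1 : RHol G).el)⁻¹ = q.2 := by group
        rw [this]; exact q.2.2⟩
      left_inv := fun p => by
        apply Subtype.ext
        apply Prod.ext
        · rfl
        · show ((p.1.1 : RHol G).el * p.1.2⁻¹)⁻¹ * (p.1.1 : RHol G).el = p.1.2
          group
      right_inv := fun q => by
        apply Prod.ext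
        · rfl
        · apply Subtype.ext
          show ((q.1 : RHol G)).el * ((q.2 : G)⁻¹ * (q.1 : RHol G).el)⁻¹ = q.2
          group }
  have cardP2 : Nat.card {p : 𝒢 × G // ((p.1 : RHol G)).el * p.2⁻¹ ∈ X}
      = Nat.card G * Nat.card {x : 𝒢 // (x : RHol G).el ∈ X} := by
    rw [← Nat.card_prod]
    apply Nat.card_congr
    apply Equiv.symm
    exact
    { toFun := fun q => ⟨(q.2.1 * y q.1, q.1), by
        show ((q.2.1 * y q.1 : 𝒢) : RHol G).el * q.1⁻¹ ∈ X
        rw [Subgroup.coe_mul, RHol.mul_el, mul_assoc]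
        exact mul_mem (autX _ (y q.1).2 _ q.2.2) (hy q.1)⟩
      invFun := fun p => (p.1.2, ⟨p.1.1 * (y p.1.2)⁻¹, by
        show ((p.1.1 * (y p.1.2)⁻¹ : 𝒢) : RHol G).el ∈ X
        have hmm : ((p.1.1 : RHol G)).el * ((y p.1.2 : RHol G)).el⁻¹ ∈ X := by
          have := mul_mem p.2 (inv_mem (hy p.1.2))
          convert this using 1
          group
        rw [Subgroup.coe_mul, RHol.mul_el, Subgroup.coe_inv, RHol.inv_el, RHol.inv_aut,
          ← map_mul]
        exact autX _ (inv_mem (y p.1.2).2) _ hmm⟩)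
      left_inv := fun q => by
        apply Prod.ext
        · rfl
        · apply Subtype.ext
          show (q.2.1 * y q.1) * (y q.1)⁻¹ = q.2.1
          group
      right_inv := fun p => by
        apply Subtype.ext
        apply Prod.ext
        · show (p.1.1 * (y p.1.2)⁻¹) * y p.1.2 = p.1.1
          group
        · rfl }
  have cardF1 : Nat.card {x : 𝒢 // (x : RHol G).el ∈ X} = Nat.card X := by
    have h := cardP2.symm.trans cardP1
    rw [hcard] at h
    exact Nat.eq_of_mul_eq_mul_left hGpos h
  -- the key lemma: an element of 𝒢 whose G-part lies in X has trivial aut-part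
  have KL : ∀ x : 𝒢, (x : RHol G).el ∈ X → (x : RHol G) = ⟨1, (x : RHol G).el⟩ := by
    intro x hx
    set ι : X → {x : 𝒢 // (x : RHol G).el ∈ X} :=
      fun h => ⟨⟨⟨1, (h : G)⟩, (hX (h : G)).mp h.2⟩, h.2⟩ with hι
    have ιinj : Function.Injective ι := by
      intro h1 h2 he
      have := congrArg (fun z : {x : 𝒢 // (x : RHol G).el ∈ X} => ((z : 𝒢) : RHol G).el) he
      exact Subtype.ext this
    have ιbij : Function.Bijective ι :=
      (Nat.bijective_iff_injective_and_card ι).mpr ⟨ιinj, cardF1.symm⟩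
    obtain ⟨h, hh⟩ := ιbij.2 ⟨x, hx⟩
    have h1 : ((⟨1, (h : G)⟩ : RHol G)) = (x : RHol G) :=
      congrArg (fun z : {x : 𝒢 // (x : RHol G).el ∈ X} => ((z : 𝒢) : RHol G)) hh
    have h2 : (h : G) = (x : RHol G).el := congrArg RHol.el h1
    rw [← h1, h2]
  -- injectivity and bijectivity of the projection 𝒢 → G
  have elInj : Function.Injective (fun x : 𝒢 => (x : RHol G).el) := by
    intro a b h
    simp only at h
    have hel : ((a * b⁻¹ : 𝒢) : RHol G).el = 1 := by
      show ((a : RHol G) * (b : RHol G)⁻¹).el = 1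
      simp only [RHol.mul_el, RHol.inv_el, RHol.inv_aut]
      rw [← map_mul, h]
      simp
    have h1 : ((a * b⁻¹ : 𝒢) : RHol G) = 1 := by
      rw [KL (a * b⁻¹) (hel ▸ one_mem X), hel]
      rfl
    have h2 : a * b⁻¹ = 1 := Subtype.ext h1
    rw [← mul_inv_eq_one]
    exact h2
  have elBij : Function.Bijective (fun x : 𝒢 => (x : RHol G).el) :=
    (Nat.bijective_iff_injective_and_card _).mpr ⟨elInj, hcard⟩
  set e : 𝒢 ≃ G := Equiv.ofBijective _ elBij with he
  have he_apply : ∀ x : 𝒢, e x = (x : RHol G).el := fun x => rfl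
  -- the master counting lemma
  have master : ∀ z : 𝒢,
      diffCount {x : 𝒢 | (x : RHol G).el ∈ R} z = diffCount R (z : RHol G).el := by
    intro z
    rw [diffCount_eq_card, diffCount_eq_card]
    apply Nat.card_congr
    refine Equiv.subtypeEquiv ((Equiv.inv 𝒢).trans (e.trans (Equiv.inv G))) fun x => ?_
    have hEx : ((Equiv.inv 𝒢).trans (e.trans (Equiv.inv G))) x
        = (x : RHol G).aut.symm ((x : RHol G).el) := by
      show (e x⁻¹)⁻¹ = _
      rw [he_apply]
      show (((x : RHol G)⁻¹).el)⁻¹ = _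
      rw [RHol.inv_el, ← map_inv, inv_inv]
    rw [hEx]
    have hx_iff : (x : RHol G).el ∈ R ↔ (x : RHol G).aut.symm ((x : RHol G).el) ∈ R := by
      have := memR ((x : RHol G)⁻¹) (inv_mem x.2) ((x : RHol G).el)
      rw [RHol.inv_aut] at this
      exact this.symm
    have hzx : ((z * x : 𝒢) : RHol G).el ∈ R
        ↔ (z : RHol G).el * (x : RHol G).aut.symm ((x : RHol G).el) ∈ R := by
      rw [Subgroup.coe_mul, RHol.mul_el]
      have h1 : (z : RHol G).el * (x : RHol G).aut.symm ((x : RHol G).el)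
          = (x : RHol G).aut.symm ((x : RHol G).aut ((z : RHol G).el) * (x : RHol G).el) := by
        rw [map_mul, MulEquiv.symm_apply_apply]
      rw [h1]
      have := memR ((x : RHol G)⁻¹) (inv_mem x.2)
        ((x : RHol G).aut ((z : RHol G).el) * (x : RHol G).el)
      rw [RHol.inv_aut] at this
      exact this.symm
    exact and_congr hx_iff hzx
  -- elements of 𝒢 equal to 1 iff their G-part is 1
  have el_one : ∀ z : 𝒢, (z : RHol G).el = 1 → z = 1 := by
    intro z hz
    apply elInj
    exact hz
  -- the subgroup 𝒰
  refine ⟨{ carrier := {x : 𝒢 | (x : RHol G).el ∈ U}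
            one_mem' := one_mem U
            mul_mem' := ?_
            inv_mem' := ?_ }, rfl, ?_, ?_, ?_, ?_, ?_, ?_⟩
  · intro a b ha hb
    show ((a * b : 𝒢) : RHol G).el ∈ U
    rw [Subgroup.coe_mul, RHol.mul_el]
    exact mul_mem ((autU _ b.2 _).mpr ha) hb
  · intro a ha
    show ((a⁻¹ : 𝒢) : RHol G).el ∈ U
    rw [Subgroup.coe_inv, RHol.inv_el]
    have := (autU ((a : RHol G)⁻¹) (inv_mem a.2) ((a : RHol G).el⁻¹)).mpr (inv_mem ha)
    rwa [RHol.inv_aut] at this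
  -- card 𝒰 = card U
  · exact Nat.card_congr (Equiv.subtypeEquiv e fun x => Iff.rfl)
  -- card 𝒢 = m * u
  · exact hcard.trans hmu
  -- card 𝒰 = u
  · exact (Nat.card_congr (Equiv.subtypeEquiv e fun x => Iff.rfl)).trans hu
  -- card ℛ = k
  · exact (Nat.card_congr (Equiv.subtypeEquiv e fun x => Iff.rfl)).trans hk
  -- outside counts
  · intro z hz
    rw [master z]
    exact hout _ hz
  -- inside counts
  · intro z hz hz1
    rw [master z]
    refine hin _ hz fun h => hz1 (el_one z h)
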